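/- Let a, b > 0 and c, x, y ≥ 0 be such that for all μ ∈ (0,1] the inequality y ≤ a·μ + (b/μ)·x + c·√x holds. Then y ≤ (2b + c·√(b/a))·x if x > a/b, and y ≤ (2√(ab) + c)·√x if x ≤ a/b. -/

import Mathlib

theorem est_split (a b c x y : ℝ) (ha : 0 < a) (hb : 0 < b)
    (hc : 0 ≤ c) (hx : 0 ≤ x) (hy : 0 ≤ y)
    (h : ∀ μ : ℝ, 0 < μ → μ ≤ 1 → y ≤ a * μ + (b / μ) * x + c * Real.sqrt x) :
    (x > a / b → y ≤ (2 * b + c * Real.sqrt (b / a)) * x) ∧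
    (x ≤ a / b → y ≤ (2 * Real.sqrt (a * b) + c) * Real.sqrt x) := by
  constructor
  · intro hxg
    have h1 := h 1 one_pos le_rfl
    have hax : a < b * x := by
      rw [gt_iff_lt, div_lt_iff₀ hb] at hxg; linarith
    have hxpos : 0 < x := lt_trans (div_pos ha hb) hxg
    have hsx : Real.sqrt x ≤ Real.sqrt (b / a) * x := by
      have h1' : Real.sqrt x ≤ Real.sqrt (b / a * x ^ 2) := by
        apply Real.sqrt_le_sqrt
        rw [div_mul_eq_mul_div, le_div_iff₀ ha]
        nlinarith
      have h2' : Real.sqrt (b / a * x ^ 2) = Real.sqrt (b / a) * x := by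
        rw [Real.sqrt_mul (by positivity), Real.sqrt_sq hx]
      linarith [h1', h2'.le, h2'.ge]
    calc y ≤ a * 1 + (b / 1) * x + c * Real.sqrt x := h1
      _ ≤ 2 * b * x + c * (Real.sqrt (b / a) * x) := by
          have := mul_le_mul_of_nonneg_left hsx hc
          nlinarith
      _ = (2 * b + c * Real.sqrt (b / a)) * x := by ring
  · intro hxle
    rcases eq_or_lt_of_le hx with hx0 | hxpos
    · -- x = 0 : y ≤ a μ for all μ, so y ≤ 0
      have h0 : ∀ μ : ℝ, 0 < μ → μ ≤ 1 → y ≤ a * μ := by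
        intro μ h1 h2
        have := h μ h1 h2
        rw [← hx0] at this
        simpa using this
      have hy0 : y ≤ 0 := by
        by_contra hpos
        push_neg at hpos
        set μ := min 1 (y / (2 * a)) with hμ
        have hμpos : 0 < μ := lt_min one_pos (div_pos hpos (by linarith))
        have hμle : μ ≤ 1 := min_le_left _ _
        have h1 := h0 μ hμpos hμle
        have h2 : a * μ ≤ a * (y / (2 * a)) :=
          mul_le_mul_of_nonneg_left (min_le_right _ _) ha.le
        have h3 : a * (y / (2 * a)) = y / 2 := by field_simp
        linarith
      have : (0:ℝ) ≤ (2 * Real.sqrt (a * b) + c) * Real.sqrt x := by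
        positivity
      linarith
    · -- x > 0: take μ = √(b x / a)
      set μ := Real.sqrt (b * x / a) with hμ
      have hμpos : 0 < μ := Real.sqrt_pos.mpr (by positivity)
      have hμle : μ ≤ 1 := by
        rw [hμ, show (1:ℝ) = Real.sqrt 1 by simp]
        apply Real.sqrt_le_sqrt
        rw [div_le_one ha]
        rw [le_div_iff₀ hb] at hxle
        linarith
      have hmu2 : μ ^ 2 = b * x / a := Real.sq_sqrt (by positivity)
      have hkey := h μ hμpos hμle
      have e1 : a * μ = Real.sqrt (a * b) * Real.sqrt x := by
        apply (pow_left_inj₀ (by positivity) (by positivity) two_ne_zero).mp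
        rw [mul_pow, hmu2, mul_pow, Real.sq_sqrt (by positivity : (0:ℝ) ≤ a * b),
          Real.sq_sqrt hx]
        field_simp
      have e2 : (b / μ) * x = Real.sqrt (a * b) * Real.sqrt x := by
        apply (pow_left_inj₀ (by positivity) (by positivity) two_ne_zero).mp
        rw [mul_pow, div_pow, hmu2, mul_pow, Real.sq_sqrt (by positivity : (0:ℝ) ≤ a * b),
          Real.sq_sqrt hx]
        field_simp
      rw [e1, e2] at hkey
      have : (2 * Real.sqrt (a * b) + c) * Real.sqrt x =
          Real.sqrt (a * b) * Real.sqrt x + Real.sqrt (a * b) * Real.sqrt x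
          + c * Real.sqrt x := by ring
      linarith
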